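/- Let X be a reduced scheme of finite type over a perfect field k of characteristic p > 0 which satisfies Serre's condition S₂. Let f : Y → X be a finite universal homeomorphism with Y reduced, such that f is an isomorphism over a dense open U ⊆ X whose complement has codimension ≥ 2 and such that U (hence its preimage) is S₂. Then the local sections of O_Y over the preimage of U are iterated p-th power roots of sections of O_U, i.e., for every affine open, O_Y-sections have some p-power lying in O_X. -/

import Mathlib

universe u

open scoped TensorProduct

/-- A ring map `f : A → B` is a universal homeomorphism if for every `A`-algebra `C` the
base-changed map `Spec (C ⊗[A] B) → Spec C` is a homeomorphism. -/
def IsUnivHomeoRingHom {A B : Type u} [CommRing A] [CommRing B] (f : A →+* B) : Prop :=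
  ∀ (C : Type u) [CommRing C] (g : A →+* C),
    letI : Algebra A B := f.toAlgebra
    letI : Algebra A C := g.toAlgebra
    IsHomeomorph (PrimeSpectrum.comap (algebraMap C (C ⊗[A] B)))

/-- A local ring has depth at least one. -/
def DepthGeOne (R : Type u) [CommRing R] [IsLocalRing R] : Prop :=
  ∃ x ∈ IsLocalRing.maximalIdeal R, x ∈ nonZeroDivisors R

/-- A local ring has depth at least two. -/
def DepthGeTwo (R : Type u) [CommRing R] [IsLocalRing R] : Prop :=
  ∃ x ∈ IsLocalRing.maximalIdeal R, x ∈ nonZeroDivisors R ∧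
    ∃ y ∈ IsLocalRing.maximalIdeal R,
      Ideal.Quotient.mk (Ideal.span {x}) y ∈ nonZeroDivisors (R ⧸ Ideal.span ({x} : Set R))

/-- Serre's condition `S₂` at a prime. -/
def SerreS2At (A : Type u) [CommRing A] (q : PrimeSpectrum A) : Prop :=
  ((1 : ℕ∞) ≤ Order.height q → DepthGeOne (Localization.AtPrime q.asIdeal)) ∧
  ((2 : ℕ∞) ≤ Order.height q → DepthGeTwo (Localization.AtPrime q.asIdeal))

/-- Serre's condition `S₂`. -/
def SerreS2 (A : Type u) [CommRing A] : Prop := ∀ q, SerreS2At A q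

/-- In any commutative ring, an element of a minimal prime is a zerodivisor. -/
lemma aux_mem_minimalPrimes_not_nzd {R : Type*} [CommRing R] {P : Ideal R}
    (hP : P ∈ minimalPrimes R) {x : R} (hx : x ∈ P) : x ∉ nonZeroDivisors R := by
  intro hnzd
  have hPprime : P.IsPrime := hP.1.1
  have h1P : (1 : R) ∉ P := fun h => hPprime.ne_top (Ideal.eq_top_of_isUnit_mem _ h isUnit_one)
  let S : Submonoid R :=
    { carrier := {r | ∃ (n : ℕ) (s : R), s ∉ P ∧ r = x ^ n * s}
      mul_mem' := by
        rintro a b ⟨n, s, hs, rfl⟩ ⟨m, t, ht, rfl⟩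
        exact ⟨n + m, s * t, fun h => ((hPprime.mem_or_mem h).elim hs ht), by ring⟩
      one_mem' := ⟨0, 1, h1P, by ring⟩ }
  have hdisj : Disjoint (((⊥ : Ideal R) : Set R)) (S : Set R) := by
    rw [Set.disjoint_left]
    rintro z hz ⟨n, s, hs, hzs⟩
    have hz0 : z = 0 := by simpa using hz
    rw [hz0] at hzs
    have hs0 : s = 0 := (pow_mem hnzd n).2 s (by rw [mul_comm]; exact hzs.symm)
    exact hs (hs0 ▸ P.zero_mem)
  obtain ⟨p, hpprime, -, hpdisj⟩ := Ideal.exists_le_prime_disjoint (⊥ : Ideal R) S hdisj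
  have hpP : p ≤ P := by
    intro z hz
    by_contra hzP
    exact Set.disjoint_left.mp hpdisj hz ⟨0, z, hzP, by ring⟩
  have hPp : P ≤ p := hP.2 ⟨hpprime, bot_le⟩ hpP
  exact Set.disjoint_left.mp hpdisj (hPp hx) ⟨1, 1, h1P, by ring⟩

lemma aux_eq_zero_of_mem_minimalPrimes {R : Type*} [CommRing R] [IsReduced R] {a : R}
    (h : ∀ P ∈ minimalPrimes R, a ∈ P) : a = 0 := by
  have hmem : a ∈ (⊥ : Ideal R).radical := by
    rw [← Ideal.sInf_minimalPrimes]
    exact Submodule.mem_sInf.mpr fun P hP => h P hP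
  obtain ⟨n, hn⟩ := Ideal.mem_radical_iff.mp hmem
  have : a ^ n = 0 := by simpa using hn
  exact IsNilpotent.eq_zero ⟨n, this⟩

lemma aux_nzd_of_not_mem_minimalPrimes {R : Type*} [CommRing R] [IsReduced R] {x : R}
    (hx : ∀ P ∈ minimalPrimes R, x ∉ P) {z : R} (hz : x * z = 0) : z = 0 := by
  refine aux_eq_zero_of_mem_minimalPrimes fun P hP => ?_
  have hPprime : P.IsPrime := hP.1.1
  exact (hPprime.mem_or_mem (show x * z ∈ P by rw [hz]; exact P.zero_mem)).resolve_left (hx P hP)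

lemma aux_isHomeomorph_comap_ringEquiv {R S : Type u} [CommRing R] [CommRing S] (e : R ≃+* S) :
    IsHomeomorph (PrimeSpectrum.comap (e : R →+* S)) := by
  rw [isHomeomorph_iff_exists_inverse]
  refine ⟨PrimeSpectrum.continuous_comap (e : R →+* S),
    PrimeSpectrum.comap (e.symm : S →+* R), ?_, ?_,
    PrimeSpectrum.continuous_comap (e.symm : S →+* R)⟩
  · intro x
    rw [← PrimeSpectrum.comap_comp_apply]
    have : (e : R →+* S).comp (e.symm : S →+* R) = RingHom.id S := by ext s; simp
    rw [this, PrimeSpectrum.comap_id]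
  · intro x
    rw [← PrimeSpectrum.comap_comp_apply]
    have : (e.symm : S →+* R).comp (e : R →+* S) = RingHom.id R := by ext s; simp
    rw [this, PrimeSpectrum.comap_id]

set_option maxHeartbeats 1000000 in
/-- Let `X = Spec A` be a reduced affine scheme of finite type over a
perfect field `k` of characteristic `p > 0` satisfying `S₂`, and let `f : A → B`
(i.e. `Y = Spec B → X`) be a finite universal homeomorphism with `B` reduced, which is an
isomorphism (on localizations) over the dense open complement `U` of a closed subset
`Z ⊆ Spec A` of codimension `≥ 2`.  Then the sections of `O_Y` are iterated `p`-th power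
roots of sections of `O_X`: every `b : B` has some `p`-th power iterate lying in the
image of `A`. -/
theorem sections_have_p_power_in_image
    (p : ℕ) (hp : p.Prime)
    (k : Type u) [Field k] [PerfectField k] [CharP k p]
    (A : Type u) [CommRing A] [Algebra k A] (hft : Algebra.FiniteType k A)
    [IsReduced A] (hS2 : SerreS2 A)
    (B : Type u) [CommRing B] [IsReduced B]
    (f : A →+* B) (hfin : f.Finite) (huh : IsUnivHomeoRingHom f)
    (Z : Set (PrimeSpectrum A)) (hZclosed : IsClosed Z)
    (hZcodim : ∀ q ∈ Z, (2 : ℕ∞) ≤ Order.height q)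
    (hUdense : Dense Zᶜ)
    (hiso : ∀ q : PrimeSpectrum A, q ∉ Z →
      Function.Bijective
        (IsLocalization.map (M := q.asIdeal.primeCompl) (T := q.asIdeal.primeCompl.map f)
          (Localization (q.asIdeal.primeCompl.map f)) f (Submonoid.le_comap_map _) :
          Localization q.asIdeal.primeCompl →+* Localization (q.asIdeal.primeCompl.map f))) :
    ∀ b : B, ∃ n : ℕ, b ^ p ^ n ∈ f.range := by
  classical
  -- Spec f is a homeomorphism
  have hspec : IsHomeomorph (PrimeSpectrum.comap f) := by
    letI : Algebra A B := f.toAlgebra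
    letI : Algebra A A := (RingHom.id A).toAlgebra
    have h := huh A (RingHom.id A)
    let e : (A ⊗[A] B) ≃+* B := (Algebra.TensorProduct.lid A B).toRingEquiv
    have hcomp : f = (e : (A ⊗[A] B) →+* B).comp (algebraMap A (A ⊗[A] B)) := by
      ext a
      show f a = e (algebraMap A (A ⊗[A] B) a)
      rw [Algebra.TensorProduct.algebraMap_apply]
      show f a = (Algebra.TensorProduct.lid A B) ((algebraMap A A) a ⊗ₜ 1)
      rw [Algebra.TensorProduct.lid_tmul, RingHom.algebraMap_toAlgebra]
      show f a = (RingHom.id A) a • (1 : B)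
      rw [RingHom.id_apply, Algebra.smul_def, RingHom.algebraMap_toAlgebra, mul_one]
    rw [hcomp, PrimeSpectrum.comap_comp]
    exact h.comp (aux_isHomeomorph_comap_ringEquiv e)
  -- minimal primes of A are not in Z
  have hminZ : ∀ q' : PrimeSpectrum A, q'.asIdeal ∈ minimalPrimes A → q' ∉ Z := by
    intro q' hq' hq'Z
    have hmin : IsMin q' := fun r hr => hq'.2 ⟨r.2, bot_le⟩ hr
    have h2 := hZcodim _ hq'Z
    rw [Order.height_eq_zero.mpr hmin] at h2
    simp at h2
  -- f is injective
  have hfinj : Function.Injective f := by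
    rw [injective_iff_map_eq_zero]
    intro a ha
    refine aux_eq_zero_of_mem_minimalPrimes fun P hP => ?_
    have hPprime : P.IsPrime := hP.1.1
    set q : PrimeSpectrum A := ⟨P, hPprime⟩ with hqdef
    have hbij := hiso q (hminZ q hP)
    have hFalg : ∀ z : A,
        (IsLocalization.map (M := q.asIdeal.primeCompl) (T := q.asIdeal.primeCompl.map f)
          (Localization (q.asIdeal.primeCompl.map f)) f (Submonoid.le_comap_map _))
          (algebraMap A (Localization q.asIdeal.primeCompl) z)
        = algebraMap B (Localization (q.asIdeal.primeCompl.map f)) (f z) := fun z => by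
      rw [← RingHom.comp_apply, IsLocalization.map_comp, RingHom.comp_apply]
    have h3 : algebraMap A (Localization q.asIdeal.primeCompl) a = 0 := by
      apply hbij.1
      rw [hFalg, ha, map_zero, map_zero]
    obtain ⟨m, hm⟩ := (IsLocalization.map_eq_zero_iff q.asIdeal.primeCompl _ a).mp h3
    exact (hPprime.mem_or_mem
      (show (m : A) * a ∈ P by rw [hm]; exact P.zero_mem)).resolve_left m.2
  -- main argument
  intro b
  refine ⟨0, ?_⟩
  rw [pow_zero, pow_one]
  by_contra hb
  -- the "conductor-like" ideal of b
  let I : Ideal A :=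
    { carrier := {a | ∃ c, f c = f a * b}
      zero_mem' := ⟨0, by simp⟩
      add_mem' := by
        rintro a a' ⟨c, hc⟩ ⟨c', hc'⟩
        exact ⟨c + c', by rw [map_add, map_add, add_mul, hc, hc']⟩
      smul_mem' := by
        rintro r a ⟨c, hc⟩
        exact ⟨r * c, by rw [smul_eq_mul, map_mul, map_mul, mul_assoc, hc]⟩ }
  have hmemI : ∀ a : A, a ∈ I ↔ ∃ c, f c = f a * b := fun a => Iff.rfl
  have hInetop : I ≠ ⊤ := by
    intro h
    have h1 : (1 : A) ∈ I := h ▸ Submodule.mem_top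
    obtain ⟨c, hc⟩ := (hmemI 1).mp h1
    exact hb ⟨c, by rwa [map_one, one_mul] at hc⟩
  obtain ⟨Mx, hMx, hIMx⟩ := Ideal.exists_le_maximal I hInetop
  haveI := hMx.isPrime
  obtain ⟨Q, hQ, -⟩ := Ideal.exists_minimalPrimes_le hIMx
  have hQprime : Q.IsPrime := hQ.1.1
  have hIQ : I ≤ Q := hQ.1.2
  set q : PrimeSpectrum A := ⟨Q, hQprime⟩ with hqdef
  set F := (IsLocalization.map (M := q.asIdeal.primeCompl) (T := q.asIdeal.primeCompl.map f)
      (Localization (q.asIdeal.primeCompl.map f)) f (Submonoid.le_comap_map _) :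
      Localization q.asIdeal.primeCompl →+* Localization (q.asIdeal.primeCompl.map f)) with hF
  have hFalg : ∀ z : A, F (algebraMap A (Localization q.asIdeal.primeCompl) z)
      = algebraMap B (Localization (q.asIdeal.primeCompl.map f)) (f z) := fun z => by
    rw [hF, ← RingHom.comp_apply, IsLocalization.map_comp, RingHom.comp_apply]
  set β := algebraMap B (Localization (q.asIdeal.primeCompl.map f)) b with hβdef
  -- β is not in the image of F
  have hβ : ∀ w, F w ≠ β := by
    intro w hw
    obtain ⟨⟨a, s⟩, rfl⟩ := IsLocalization.mk'_surjective q.asIdeal.primeCompl w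
    rw [hF, IsLocalization.map_mk'] at hw
    rw [IsLocalization.mk'_eq_iff_eq_mul] at hw
    have hw2 : algebraMap B (Localization (q.asIdeal.primeCompl.map f)) (f a)
        = algebraMap B (Localization (q.asIdeal.primeCompl.map f)) (b * f ↑s) := by
      rw [map_mul]; exact hw
    obtain ⟨c, hc⟩ := (IsLocalization.eq_iff_exists (q.asIdeal.primeCompl.map f) _).mp hw2
    obtain ⟨u, hu, hum⟩ := c.2
    rw [← hum] at hc
    have husI : u * ↑s ∈ I := by
      refine (hmemI _).mpr ⟨u * a, ?_⟩
      rw [map_mul, map_mul, hc]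
      ring
    exact (Submonoid.mul_mem _ hu s.2 : u * ↑s ∈ q.asIdeal.primeCompl) (hIQ husI)
  -- hence q lies in Z, so it has height at least 2, so we get depth 2
  have hqZ : q ∈ Z := by
    by_contra hqZ
    obtain ⟨w, hw⟩ := (hiso q hqZ).2 β
    exact hβ w hw
  obtain ⟨x, hxm, hxnzd, y, hym, hynzd⟩ := (hS2 q).2 (hZcodim q hqZ)
  -- F is injective
  have hFinj : Function.Injective F := by
    rw [injective_iff_map_eq_zero]
    intro w hw
    obtain ⟨⟨a, s⟩, rfl⟩ := IsLocalization.mk'_surjective q.asIdeal.primeCompl w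
    rw [hF, IsLocalization.map_mk', IsLocalization.mk'_eq_zero_iff] at hw
    obtain ⟨m, hm⟩ := hw
    obtain ⟨u, hu, hum⟩ := m.2
    rw [← hum] at hm
    have hua : u * a = 0 := hfinj (by rw [map_mul, map_zero]; exact hm)
    rw [IsLocalization.mk'_eq_zero_iff]
    exact ⟨⟨u, hu⟩, hua⟩
  -- the ideal J in the localization
  let J : Ideal (Localization.AtPrime q.asIdeal) :=
    { carrier := {r | ∃ c, F c = F r * β}
      zero_mem' := ⟨0, by simp⟩
      add_mem' := by
        rintro r r' ⟨c, hc⟩ ⟨c', hc'⟩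
        exact ⟨c + c', by rw [map_add, map_add, add_mul, hc, hc']⟩
      smul_mem' := by
        rintro w r ⟨c, hc⟩
        exact ⟨w * c, by rw [smul_eq_mul, map_mul, map_mul, mul_assoc, hc]⟩ }
  have hmemJ : ∀ r, r ∈ J ↔ ∃ c, F c = F r * β := fun r => Iff.rfl
  have hJ1 : (1 : Localization.AtPrime q.asIdeal) ∉ J := by
    intro h
    obtain ⟨c, hc⟩ := (hmemJ 1).mp h
    rw [map_one, one_mul] at hc
    exact hβ c hc
  -- the maximal ideal is contained in the radical of J
  have hmrad : ∀ r ∈ IsLocalRing.maximalIdeal (Localization.AtPrime q.asIdeal),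
      r ∈ J.radical := by
    intro r hr
    rw [Ideal.radical_eq_sInf]
    refine Submodule.mem_sInf.mpr ?_
    rintro P ⟨hJP, hPprime⟩
    haveI := hPprime
    have hPle : P ≤ IsLocalRing.maximalIdeal _ := IsLocalRing.le_maximalIdeal hPprime.ne_top
    have hIq' : I ≤ Ideal.comap (algebraMap A (Localization.AtPrime q.asIdeal)) P := by
      intro a ha
      obtain ⟨c, hc⟩ := (hmemI a).mp ha
      refine Ideal.mem_comap.mpr (hJP ((hmemJ _).mpr ⟨algebraMap A _ c, ?_⟩))
      rw [hFalg, hFalg, hc, map_mul]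
    have hq'q : Ideal.comap (algebraMap A (Localization.AtPrime q.asIdeal)) P ≤ q.asIdeal := by
      have h := Ideal.comap_mono (f := algebraMap A (Localization.AtPrime q.asIdeal)) hPle
      exact h.trans_eq Localization.AtPrime.comap_maximalIdeal
    have hq'eq : Ideal.comap (algebraMap A (Localization.AtPrime q.asIdeal)) P = q.asIdeal :=
      le_antisymm hq'q (hQ.2 ⟨Ideal.IsPrime.comap _, hIq'⟩ hq'q)
    have hPeq : P = IsLocalRing.maximalIdeal (Localization.AtPrime q.asIdeal) := by
      have h1 := IsLocalization.map_comap q.asIdeal.primeCompl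
        (Localization.AtPrime q.asIdeal) P
      rw [← h1, show Ideal.under A P = q.asIdeal from hq'eq, Localization.AtPrime.map_eq_maximalIdeal]
    exact hPeq ▸ hr
  -- minimal primes of B contract to minimal primes of A
  have hminB : ∀ P₀ ∈ minimalPrimes B, Ideal.comap f P₀ ∈ minimalPrimes A := by
    intro P₀ hP₀
    haveI hP₀p : P₀.IsPrime := hP₀.1.1
    refine ⟨⟨Ideal.IsPrime.comap f, bot_le⟩, ?_⟩
    rintro q₁ ⟨hq₁prime, -⟩ hle
    obtain ⟨h, hh⟩ := isHomeomorph_iff_exists_homeomorph.mp hspec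
    obtain ⟨p₁, hp₁⟩ := h.surjective ⟨q₁, hq₁prime⟩
    have e1 : h ⟨P₀, hP₀p⟩ = (⟨Ideal.comap f P₀, Ideal.IsPrime.comap f⟩ : PrimeSpectrum A) := by
      rw [show (h : PrimeSpectrum B → PrimeSpectrum A) ⟨P₀, hP₀p⟩
        = PrimeSpectrum.comap f ⟨P₀, hP₀p⟩ from congrFun hh _]
      rfl
    have hsp : (⟨q₁, hq₁prime⟩ : PrimeSpectrum A) ⤳
        (⟨Ideal.comap f P₀, Ideal.IsPrime.comap f⟩ : PrimeSpectrum A) :=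
      (PrimeSpectrum.le_iff_specializes _ _).mp hle
    have hsp2 : h p₁ ⤳ h ⟨P₀, hP₀p⟩ := by rw [hp₁, e1]; exact hsp
    have hsp3 : p₁ ⤳ ⟨P₀, hP₀p⟩ := by
      have h4 := hsp2.map h.symm.continuous
      simpa using h4
    have hle' : p₁ ≤ ⟨P₀, hP₀p⟩ := (PrimeSpectrum.le_iff_specializes _ _).mpr hsp3
    have hP₀le : P₀ ≤ p₁.asIdeal := hP₀.2 ⟨p₁.2, bot_le⟩ hle'
    have hcq : PrimeSpectrum.comap f p₁ = (⟨q₁, hq₁prime⟩ : PrimeSpectrum A) := by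
      rw [← congrFun hh p₁]; exact hp₁
    have hq₁ : Ideal.comap f p₁.asIdeal = q₁ := congrArg PrimeSpectrum.asIdeal hcq
    exact (Ideal.comap_mono hP₀le).trans (le_of_eq hq₁)
  -- F x is a nonzerodivisor
  have hFx : ∀ z, F x * z = 0 → z = 0 := by
    intro z hz
    refine aux_nzd_of_not_mem_minimalPrimes ?_ hz
    intro P hP hFxP
    haveI hPp : P.IsPrime := hP.1.1
    have hP₀min : Ideal.comap (algebraMap B (Localization (q.asIdeal.primeCompl.map f))) P
        ∈ minimalPrimes B := by
      haveI : (Ideal.comap (algebraMap B (Localization (q.asIdeal.primeCompl.map f))) P).IsPrime :=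
        Ideal.IsPrime.comap _
      refine ⟨⟨inferInstance, bot_le⟩, ?_⟩
      rintro P₁ ⟨hP₁prime, -⟩ hle
      have hdisj : Disjoint ((q.asIdeal.primeCompl.map f : Submonoid B) : Set B)
          (P₁ : Set B) := by
        rw [Set.disjoint_left]
        intro m hm hmP₁
        have h1 : algebraMap B (Localization (q.asIdeal.primeCompl.map f)) m ∈ P :=
          Ideal.mem_comap.mp (hle hmP₁)
        have h2 : IsUnit (algebraMap B (Localization (q.asIdeal.primeCompl.map f)) m) :=
          IsLocalization.map_units _ ⟨m, hm⟩
        exact hPp.ne_top (Ideal.eq_top_of_isUnit_mem _ h1 h2)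
      haveI hmapP₁ := IsLocalization.isPrime_of_isPrime_disjoint (q.asIdeal.primeCompl.map f)
        (Localization (q.asIdeal.primeCompl.map f)) P₁ hP₁prime hdisj
      have hmaple : Ideal.map (algebraMap B (Localization (q.asIdeal.primeCompl.map f))) P₁
          ≤ P := by
        have h3 := Ideal.map_mono
          (f := algebraMap B (Localization (q.asIdeal.primeCompl.map f))) hle
        rwa [IsLocalization.map_comap (q.asIdeal.primeCompl.map f)] at h3
      have hPle2 := hP.2 ⟨hmapP₁, bot_le⟩ hmaple
      have h4 := Ideal.comap_mono
        (f := algebraMap B (Localization (q.asIdeal.primeCompl.map f))) hPle2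
      exact h4.trans_eq (IsLocalization.comap_map_of_isPrime_disjoint (q.asIdeal.primeCompl.map f)
        (Localization (q.asIdeal.primeCompl.map f)) hP₁prime hdisj)
    have hq₀min := hminB _ hP₀min
    have hcomm : Ideal.comap (algebraMap A (Localization.AtPrime q.asIdeal)) (Ideal.comap F P)
        = Ideal.comap f
          (Ideal.comap (algebraMap B (Localization (q.asIdeal.primeCompl.map f))) P) := by
      rw [Ideal.comap_comap, Ideal.comap_comap, hF, IsLocalization.map_comp]
    have hPrmin : Ideal.comap F P ∈ minimalPrimes (Localization.AtPrime q.asIdeal) := by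
      haveI : (Ideal.comap F P).IsPrime := Ideal.IsPrime.comap _
      refine ⟨⟨inferInstance, bot_le⟩, ?_⟩
      rintro P' ⟨hP'prime, -⟩ hle
      haveI := hP'prime
      have h1 : Ideal.comap (algebraMap A (Localization.AtPrime q.asIdeal)) P'
          ≤ Ideal.comap (algebraMap A (Localization.AtPrime q.asIdeal)) (Ideal.comap F P) :=
        Ideal.comap_mono hle
      have h2 : Ideal.comap (algebraMap A (Localization.AtPrime q.asIdeal)) (Ideal.comap F P)
          ≤ Ideal.comap (algebraMap A (Localization.AtPrime q.asIdeal)) P' := by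
        rw [hcomm]
        exact hq₀min.2 ⟨Ideal.IsPrime.comap _, bot_le⟩ (by rw [← hcomm]; exact h1)
      have h3 : Ideal.comap (algebraMap A (Localization.AtPrime q.asIdeal)) P'
          = Ideal.comap (algebraMap A (Localization.AtPrime q.asIdeal)) (Ideal.comap F P) :=
        le_antisymm h1 h2
      calc Ideal.comap F P
          = Ideal.map (algebraMap A (Localization.AtPrime q.asIdeal))
            (Ideal.comap (algebraMap A (Localization.AtPrime q.asIdeal)) (Ideal.comap F P)) :=
            (IsLocalization.map_comap q.asIdeal.primeCompl _ _).symm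
        _ = Ideal.map (algebraMap A (Localization.AtPrime q.asIdeal))
            (Ideal.comap (algebraMap A (Localization.AtPrime q.asIdeal)) P') := by rw [h3]
        _ ≤ P' := le_of_eq (IsLocalization.map_comap q.asIdeal.primeCompl _ _)
    exact aux_mem_minimalPrimes_not_nzd hPrmin (Ideal.mem_comap.mpr hFxP) hxnzd
  -- the final depth-two argument
  obtain ⟨Nx, hNx⟩ := Ideal.mem_radical_iff.mp (hmrad x hxm)
  have hEx : ∃ n, x ^ n ∈ J := ⟨Nx, hNx⟩
  have ht := Nat.find_spec hEx
  have ht0 : Nat.find hEx ≠ 0 := by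
    intro h
    rw [h, pow_zero] at ht
    exact hJ1 ht
  have htpred : x ^ (Nat.find hEx - 1) ∉ J := Nat.find_min hEx (by omega)
  obtain ⟨Ny, hNy⟩ := Ideal.mem_radical_iff.mp (hmrad y hym)
  have hEy : ∃ n, y ^ n * x ^ (Nat.find hEx - 1) ∈ J := ⟨Ny, J.mul_mem_right _ hNy⟩
  have hsspec := Nat.find_spec hEy
  have hs0 : Nat.find hEy ≠ 0 := by
    intro h
    rw [h, pow_zero, one_mul] at hsspec
    exact htpred hsspec
  have hspred : y ^ (Nat.find hEy - 1) * x ^ (Nat.find hEx - 1) ∉ J :=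
    Nat.find_min hEy (by omega)
  set r₀ := y ^ (Nat.find hEy - 1) * x ^ (Nat.find hEx - 1) with hr₀
  have hxr₀ : x * r₀ ∈ J := by
    have hxx : x * r₀ = y ^ (Nat.find hEy - 1) * x ^ Nat.find hEx := by
      rw [hr₀]
      have h5 : x * x ^ (Nat.find hEx - 1) = x ^ Nat.find hEx := by
        rw [← pow_succ']
        congr 1
        omega
      rw [← h5]
      ring
    exact hxx ▸ J.mul_mem_left _ ht
  have hyr₀ : y * r₀ ∈ J := by
    have hyy : y * r₀ = y ^ Nat.find hEy * x ^ (Nat.find hEx - 1) := by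
      rw [hr₀, ← mul_assoc, ← pow_succ']
      have h6 : Nat.find hEy - 1 + 1 = Nat.find hEy := by omega
      rw [h6]
    exact hyy ▸ hsspec
  obtain ⟨a1, ha1⟩ := (hmemJ _).mp hxr₀
  obtain ⟨a2, ha2⟩ := (hmemJ _).mp hyr₀
  have key1 : y * a1 = x * a2 := by
    apply hFinj
    calc F (y * a1) = F y * F a1 := map_mul F y a1
      _ = F y * (F (x * r₀) * β) := by rw [ha1]
      _ = F y * F (x * r₀) * β := by rw [mul_assoc]
      _ = F (y * (x * r₀)) * β := by rw [map_mul F y (x * r₀)]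
      _ = F (x * (y * r₀)) * β := by rw [mul_left_comm y x r₀]
      _ = F x * F (y * r₀) * β := by rw [map_mul F x (y * r₀)]
      _ = F x * (F (y * r₀) * β) := by rw [mul_assoc]
      _ = F x * F a2 := by rw [ha2]
      _ = F (x * a2) := (map_mul F x a2).symm
  have ha1span : a1 ∈ Ideal.span ({x} : Set (Localization.AtPrime q.asIdeal)) := by
    have h0 : Ideal.Quotient.mk (Ideal.span {x}) (y * a1) = 0 := by
      rw [key1]
      exact Ideal.Quotient.eq_zero_iff_mem.mpr (Ideal.mem_span_singleton.mpr ⟨a2, rfl⟩)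
    rw [map_mul] at h0
    have h1 : Ideal.Quotient.mk (Ideal.span {x}) a1 = 0 :=
      (mem_nonZeroDivisors_iff.mp hynzd).2 _ (by rw [mul_comm]; exact h0)
    exact Ideal.Quotient.eq_zero_iff_mem.mp h1
  obtain ⟨d, hd⟩ := Ideal.mem_span_singleton.mp ha1span
  have hfinal : F x * (F r₀ * β - F d) = 0 := by
    have hxd : F (x * d) = F (x * r₀) * β := by rw [← hd, ha1]
    rw [mul_sub, sub_eq_zero]
    calc F x * (F r₀ * β) = F (x * r₀) * β := by rw [map_mul F x r₀, mul_assoc]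
      _ = F (x * d) := hxd.symm
      _ = F x * F d := by rw [map_mul]
  have hzero := hFx _ hfinal
  have hfin2 : F r₀ * β = F d := by rwa [sub_eq_zero] at hzero
  exact hspred ((hmemJ _).mpr ⟨d, hfin2.symm⟩)
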